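/- arXiv:2101.11255 — 3 statements merged into one kernel-verified Lean document; each statement's English description precedes it below -/
import Mathlib

section
/- Let s ∈ [0, 1/2], r > 0, c ∈ ℝ, and let (P, N) be a nontrivial traveling wave of the gene-drive frequency system with speed c such that P is strictly increasing and P converges exponentially fast to 0 at -∞ (i.e., there exist λ > 0 and C > 0 with P(x) ≤ C·e^{λx} for all x ≤ 0). Then P(x) → 1 as x → +∞, c < 0, and moreover c ≤ -2√(1-2s). -/
open Filter Set
theorem mono_deriv_nonneg (f : ℝ → ℝ) (h : Monotone f) (hd : Differentiable ℝ f) (x : ℝ) :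
    0 ≤ deriv f x := by
  have hD := (hd x).hasDerivAt
  rw [hasDerivAt_iff_tendsto_slope] at hD
  refine ge_of_tendsto hD ?_
  filter_upwards [self_mem_nhdsWithin] with y hy
  rw [slope_def_field]
  rcases lt_or_gt_of_ne (Ne.symm hy) with h1 | h1
  · have : f x ≤ f y := h h1.le
    exact div_nonneg (by linarith) (by linarith)
  · have : f y ≤ f x := h h1.le
    exact div_nonneg_iff.mpr (Or.inr ⟨by linarith, by linarith⟩)

theorem grow_from_deriv (f : ℝ → ℝ) (m a b : ℝ) (hab : a ≤ b)
    (hd : ∀ x ∈ Icc a b, DifferentiableAt ℝ f x)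
    (hm : ∀ x ∈ Icc a b, m ≤ deriv f x) :
    f a + m * (b - a) ≤ f b := by
  set g : ℝ → ℝ := fun x => f x - m * x with hg
  have hgd : ∀ x ∈ Icc a b, DifferentiableAt ℝ g x := fun x hx =>
    (hd x hx).sub ((differentiable_id.const_mul m) x)
  have hgderiv : ∀ x ∈ Icc a b, 0 ≤ deriv g x := by
    intro x hx
    have hder : HasDerivAt g (deriv f x - m) x := by
      have h := (hd x hx).hasDerivAt.sub ((hasDerivAt_id x).const_mul m)
      rw [mul_one] at h
      exact h
    have : deriv g x = deriv f x - m := hder.deriv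
    rw [this]; linarith [hm x hx]
  have hmono : MonotoneOn g (Icc a b) := by
    apply monotoneOn_of_deriv_nonneg (convex_Icc a b)
    · exact fun x hx => (hgd x hx).continuousAt.continuousWithinAt
    · intro x hx
      exact (hgd x (interior_subset hx)).differentiableWithinAt
    · intro x hx
      exact hgderiv x (interior_subset hx)
  have := hmono (left_mem_Icc.2 hab) (right_mem_Icc.2 hab) hab
  simp only [hg] at this
  linarith

theorem decay_from_deriv (f : ℝ → ℝ) (m a b : ℝ) (hab : a ≤ b)
    (hd : ∀ x ∈ Icc a b, DifferentiableAt ℝ f x)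
    (hm : ∀ x ∈ Icc a b, deriv f x ≤ m) :
    f b ≤ f a + m * (b - a) := by
  have hd' : ∀ x ∈ Icc a b, DifferentiableAt ℝ (fun y => -f y) x := fun x hx => (hd x hx).neg
  have hm' : ∀ x ∈ Icc a b, -m ≤ deriv (fun y => -f y) x := by
    intro x hx
    have : deriv (fun y => -f y) x = -deriv f x := by
      simpa using ((hd x hx).hasDerivAt.neg).deriv
    rw [this]; linarith [hm x hx]
  have := grow_from_deriv (fun y => -f y) (-m) a b hab hd' hm'
  simp at this
  linarith

theorem invariant_ge (f : ℝ → ℝ) (hf : Differentiable ℝ f) (a K : ℝ) (haK : K ≤ f a)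
    (hd : ∀ x, a ≤ x → f x = K → 0 < deriv f x) :
    ∀ x, a ≤ x → K ≤ f x := by
  intro x hx
  by_contra hlt
  push_neg at hlt
  have hax : a < x := by
    rcases eq_or_lt_of_le hx with h | h
    · exact absurd haK (by rw [h]; linarith)
    · exact h
  set S := Icc a x ∩ f ⁻¹' (Ici K) with hS
  have hSne : S.Nonempty := ⟨a, left_mem_Icc.2 hx, haK⟩
  have hSbdd : BddAbove S := ⟨x, fun y hy => hy.1.2⟩
  have hScl : IsClosed S := isClosed_Icc.inter (isClosed_Ici.preimage hf.continuous)
  set z := sSup S with hz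
  have hzS : z ∈ S := hScl.csSup_mem hSne hSbdd
  have hza : a ≤ z := hzS.1.1
  have hzx : z ≤ x := hzS.1.2
  have hzK : K ≤ f z := hzS.2
  have hzltx : z < x := by
    rcases eq_or_lt_of_le hzx with h | h
    · exfalso; rw [h] at hzK; linarith
    · exact h
  -- all points in (z, x] have f < K
  have hright : ∀ y ∈ Ioc z x, f y < K := by
    intro y hy
    by_contra hge
    push_neg at hge
    have : y ∈ S := ⟨⟨hza.trans hy.1.le, hy.2⟩, hge⟩
    exact absurd (le_csSup hSbdd this) (not_le.2 hy.1)
  -- f z ≤ K by continuity from the right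
  have hfzK : f z = K := by
    refine le_antisymm ?_ hzK
    have htd : Tendsto f (nhdsWithin z (Ioi z)) (nhds (f z)) :=
      (hf.continuous.continuousAt).continuousWithinAt
    refine le_of_tendsto htd ?_
    filter_upwards [Ioc_mem_nhdsGT_of_mem ⟨le_refl z, hzltx⟩] with y hy
    exact (hright y hy).le
  have hder := hd z hza hfzK
  have hD := (hf z).hasDerivAt
  rw [hasDerivAt_iff_tendsto_slope] at hD
  have hev : ∀ᶠ y in nhdsWithin z {z}ᶜ, 0 < slope f z y :=
    hD.eventually (eventually_gt_nhds hder)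
  have hev2 : ∀ᶠ y in nhdsWithin z (Ioi z), 0 < slope f z y :=
    hev.filter_mono (nhdsWithin_mono z (fun y hy => ne_of_gt hy))
  have hev3 : ∀ᶠ y in nhdsWithin z (Ioi z), y ∈ Ioc z x :=
    Ioc_mem_nhdsGT_of_mem ⟨le_refl z, hzltx⟩
  obtain ⟨y, hy1, hy2⟩ := (hev2.and hev3).exists
  rw [slope_def_field, div_pos_iff] at hy1
  have hyz : z < y := hy2.1
  have : K < f y := by
    rcases hy1 with ⟨h1, _⟩ | ⟨_, h2⟩
    · rw [hfzK] at h1; linarith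
    · linarith
  exact absurd this (not_lt.2 (hright y hy2).le)

theorem invariant_le (f : ℝ → ℝ) (hf : Differentiable ℝ f) (a K : ℝ) (haK : f a ≤ K)
    (hd : ∀ x, a ≤ x → f x = K → deriv f x < 0) :
    ∀ x, a ≤ x → f x ≤ K := by
  intro x hx
  have := invariant_ge (fun y => -f y) hf.neg a (-K) (by simpa using haK) ?_ x hx
  · simpa using this
  · intro y hy hyK
    have h1 : f y = K := by
      have : -f y = -K := hyK
      linarith
    have : deriv (fun z => -f z) y = -deriv f y := by simpa using ((hf y).hasDerivAt.neg).deriv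
    rw [this]
    linarith [hd y hy h1]

set_option maxHeartbeats 1000000 in
set_option maxHeartbeats 2000000 in
/-- For `s ∈ [0, 1/2]`, a nontrivial traveling wave of the gene-drive
frequency system with strictly increasing `P` converging exponentially fast to `0`
at `-∞` satisfies: `P → 1` at `+∞`, `c < 0`, and `c ≤ -2√(1-2s)`. -/
theorem stmt12
    (s r c : ℝ) (hs0 : 0 ≤ s) (hs : s ≤ 1 / 2) (hr : 0 < r)
    (P N : ℝ → ℝ)
    (hP2 : ContDiff ℝ 2 P) (hN2 : ContDiff ℝ 2 N)
    (hNpos : ∀ x, 0 < N x)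
    (hPbd : Bornology.IsBounded (Set.range P))
    (hNbd : Bornology.IsBounded (Set.range N))
    (hPnn : ∀ x, 0 ≤ P x)
    (hPmono : StrictMono P) (hNanti : StrictAnti N)
    (hPlim : Filter.Tendsto P Filter.atBot (nhds 0))
    (hNlim : Filter.Tendsto N Filter.atBot (nhds 1))
    (heqP : ∀ x, -deriv (deriv P) x - c * deriv P x - 2 * (deriv N x / N x) * deriv P x
      = (r * (1 - N x) + 1) * P x * (1 - P x) * (s * P x - (2 * s - 1)))
    (heqN : ∀ x, -deriv (deriv N) x - c * deriv N x
      = N x * ((1 - s + s * (1 - P x) ^ 2) * (r * (1 - N x) + 1) - 1))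
    (hnontriv : ∃ x, P x ≠ 0)
    (hexp : ∃ lam > (0 : ℝ), ∃ C > (0 : ℝ), ∀ x ≤ (0 : ℝ), P x ≤ C * Real.exp (lam * x)) :
    Filter.Tendsto P Filter.atTop (nhds 1) ∧ c < 0 ∧ c ≤ -2 * Real.sqrt (1 - 2 * s) := by
  have hPd : Differentiable ℝ P := hP2.differentiable (by norm_num)
  have hNd : Differentiable ℝ N := hN2.differentiable (by norm_num)
  have hP'd : Differentiable ℝ (deriv P) := by
    have h2 : ContDiff ℝ ((1:ℕ)+1) P := by exact_mod_cast hP2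
    exact ((contDiff_succ_iff_deriv.mp h2).2.2).differentiable (by simp)
  have hN'd : Differentiable ℝ (deriv N) := by
    have h2 : ContDiff ℝ ((1:ℕ)+1) N := by exact_mod_cast hN2
    exact ((contDiff_succ_iff_deriv.mp h2).2.2).differentiable (by simp)
  have hN0 : ∀ x, N x ≠ 0 := fun x => (hNpos x).ne'
  have hPpos : ∀ x, 0 < P x := fun x => lt_of_le_of_lt (hPnn (x-1)) (hPmono (by linarith))
  have hN1 : ∀ x, N x < 1 := by
    intro x
    have h1 : N x < N (x - 1) := hNanti (by linarith)
    have h2 : N (x-1) ≤ 1 := by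
      refine ge_of_tendsto hNlim ?_
      filter_upwards [eventually_le_atBot (x-1)] with y hy
      exact hNanti.antitone hy
    linarith
  obtain ⟨F, hF⟩ : ∃ f : ℝ → ℝ, f = fun x => (r * (1 - N x) + 1) * P x * (1 - P x) * (s * P x - (2 * s - 1)) := ⟨_, rfl⟩
  obtain ⟨Q, hQdef⟩ : ∃ f : ℝ → ℝ, f = fun x => N x ^ 2 * deriv P x := ⟨_, rfl⟩
  have key : ∀ x, N x * deriv (deriv P) x
      = -(c * (N x * deriv P x)) - 2 * (deriv N x * deriv P x) - N x * F x := by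
    intro x
    have e := heqP x
    have h0 := hN0 x
    field_simp [hF] at e ⊢
    simp only [hF]
    linarith
  have hQder : ∀ x, HasDerivAt Q (-(c * Q x) - N x ^ 2 * F x) x := by
    intro x
    simp only [hQdef]
    have h1 : HasDerivAt (fun y => N y ^ 2) ((2:ℕ) * N x ^ 1 * deriv N x) x :=
      ((hNd x).hasDerivAt).pow 2
    have h3 := h1.mul ((hP'd x).hasDerivAt)
    have heq : -(c * (N x ^ 2 * deriv P x)) - N x ^ 2 * F x
        = (2:ℕ) * N x ^ 1 * deriv N x * deriv P x + N x ^ 2 * deriv (deriv P) x := by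
      push_cast
      linear_combination (-(N x)) * key x
    rw [heq]
    exact h3
  have hQ' : ∀ x, deriv Q x = -(c * Q x) - N x ^ 2 * F x := fun x => (hQder x).deriv
  have hQd : Differentiable ℝ Q := fun x => (hQder x).differentiableAt
  have hP'nn : ∀ x, 0 ≤ deriv P x := mono_deriv_nonneg P hPmono.monotone hPd
  have hQnn : ∀ x, 0 ≤ Q x := fun x => by
    simp only [hQdef]; exact mul_nonneg (sq_nonneg _) (hP'nn x)
  have hNsq1 : ∀ x, N x ^ 2 ≤ 1 := fun x => by nlinarith [hNpos x, hN1 x]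
  have hP'geQ : ∀ x, Q x ≤ deriv P x := fun x => by
    have h1 := hNsq1 x; have h2 := hP'nn x
    simp only [hQdef]
    nlinarith
  have hFnn : ∀ x, P x ≤ 1 → 0 ≤ F x := by
    intro x hx
    simp only [hF]
    have h1 := hN1 x; have h2 := hPnn x
    have : 0 ≤ s * P x - (2*s - 1) := by nlinarith
    have h3 : 0 < r * (1 - N x) + 1 := by nlinarith
    exact mul_nonneg (mul_nonneg (mul_nonneg h3.le h2) (by linarith)) this
  -- PART: c < 0
  have hcneg : c < 0 := by
    by_contra hc
    push_neg at hc
    have hev : P ⁻¹' (Iio 1) ∈ atBot := hPlim (isOpen_Iio.mem_nhds (by norm_num : (0:ℝ) ∈ Iio 1))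
    obtain ⟨x1, hx1⟩ := eventually_atBot.mp hev
    obtain ⟨ξ, hξmem, hξ⟩ := exists_deriv_eq_slope P (show x1 - 1 < x1 by linarith)
      hPd.continuous.continuousOn hPd.differentiableOn
    have hξd : 0 < deriv P ξ := by
      rw [hξ]
      have : P (x1 - 1) < P x1 := hPmono (by linarith)
      apply div_pos <;> linarith
    have hPx0 : ∀ x ≤ ξ, P x < 1 := by
      intro x hx
      calc P x ≤ P ξ := hPmono.monotone hx
      _ < P x1 := hPmono hξmem.2
      _ < 1 := hx1 x1 le_rfl
    have hq0 : 0 < Q ξ := by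
      simp only [hQdef]
      exact mul_pos (pow_pos (hNpos ξ) 2) hξd
    have hQlb : ∀ x ≤ ξ, Q ξ ≤ Q x := by
      intro x hx
      have := decay_from_deriv Q 0 x ξ hx (fun y _ => hQd y) ?_
      · linarith
      · intro y hy
        rw [hQ' y]
        have h1 := hFnn y (hPx0 y hy.2).le
        have h2 := hQnn y
        have h3 := sq_nonneg (N y)
        nlinarith
    -- deriv P ≥ Q ξ on (-∞, ξ]
    have hgrow : ∀ x ≤ ξ, P x + Q ξ * (ξ - x) ≤ P ξ := by
      intro x hx
      exact grow_from_deriv P (Q ξ) x ξ hx (fun y _ => hPd y)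
        (fun y hy => le_trans (hQlb y hy.2) (hP'geQ y))
    have hdivpos : 0 < (P ξ + 1)/(Q ξ) := div_pos (by linarith [hPpos ξ]) hq0
    have hbad := hgrow (ξ - (P ξ + 1)/(Q ξ)) (by linarith)
    have hfrac : Q ξ * ((P ξ + 1)/(Q ξ)) = P ξ + 1 := by field_simp
    have hPx := hPnn (ξ - (P ξ + 1)/(Q ξ))
    have : Q ξ * (ξ - (ξ - (P ξ + 1)/(Q ξ))) = P ξ + 1 := by
      rw [show ξ - (ξ - (P ξ + 1)/(Q ξ)) = (P ξ + 1)/(Q ξ) by ring, hfrac]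
    linarith
  -- M = sup of P
  have hbdd : BddAbove (Set.range P) := hPbd.bddAbove
  obtain ⟨M, hMdef⟩ : ∃ t : ℝ, t = ⨆ y, P y := ⟨_, rfl⟩
  have hMub : ∀ x, P x ≤ M := fun x => hMdef ▸ le_ciSup hbdd x
  have hMtend : Tendsto P atTop (nhds M) := hMdef ▸ tendsto_atTop_ciSup hPmono.monotone hbdd
  have hM0 : 0 < M := lt_of_lt_of_le (hPpos 0) (hMub 0)
  -- PART: M ≤ 1
  have hMle1 : M ≤ 1 := by
    by_contra h1M
    push_neg at h1M
    have hev : P ⁻¹' (Ioi 1) ∈ atTop := hMtend (isOpen_Ioi.mem_nhds h1M)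
    obtain ⟨x7, hx7⟩ := eventually_atTop.mp hev
    obtain ⟨ξ, hξmem, hξ⟩ := exists_deriv_eq_slope P (show x7 < x7 + 1 by linarith)
      hPd.continuous.continuousOn hPd.differentiableOn
    have hξd : 0 < deriv P ξ := by
      rw [hξ]
      have : P x7 < P (x7 + 1) := hPmono (by linarith)
      apply div_pos <;> linarith
    have hPξ : 1 < P ξ := lt_trans (hx7 x7 le_rfl) (hPmono hξmem.1)
    have hq1 : 0 < Q ξ := by
      simp only [hQdef]
      exact mul_pos (pow_pos (hNpos ξ) 2) hξd
    have hFnp : ∀ x, ξ ≤ x → F x ≤ 0 := by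
      intro x hx
      have hPx : 1 ≤ P x := le_trans hPξ.le (hPmono.monotone hx)
      have hA : 0 < r * (1 - N x) + 1 := by nlinarith [hN1 x]
      have h4 : 0 ≤ s * P x - (2*s - 1) := by nlinarith
      simp only [hF]
      have h5 : (r * (1 - N x) + 1) * P x * (1 - P x) ≤ 0 :=
        mul_nonpos_of_nonneg_of_nonpos (mul_nonneg hA.le (hPnn x)) (by linarith)
      exact mul_nonpos_of_nonpos_of_nonneg h5 h4
    have hQgrow : ∀ x, ξ ≤ x → Q ξ ≤ Q x := by
      intro x hx
      have := grow_from_deriv Q 0 ξ x hx (fun y _ => hQd y) ?_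
      · linarith
      · intro y hy
        rw [hQ' y]
        have h1 := hFnp y hy.1
        have h2 := hQnn y
        have h3 := sq_nonneg (N y)
        nlinarith
    have hgrow : ∀ b, ξ ≤ b → P ξ + Q ξ * (b - ξ) ≤ P b :=
      fun b hb => grow_from_deriv P (Q ξ) ξ b hb (fun y _ => hPd y)
        (fun y hy => le_trans (hQgrow y hy.1) (hP'geQ y))
    have hdiv : 0 < (M + 1) / Q ξ := div_pos (by linarith) hq1
    have hbad := hgrow (ξ + (M + 1)/(Q ξ)) (by linarith)
    have hfrac : Q ξ * (ξ + (M + 1)/(Q ξ) - ξ) = M + 1 := by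
      field_simp
      ring
    rw [hfrac] at hbad
    have := hMub (ξ + (M + 1)/(Q ξ))
    linarith
  -- ψ = -N'/N and its Riccati equation
  obtain ⟨g, hgdef⟩ : ∃ f : ℝ → ℝ, f = fun x => (1 - s + s * (1 - P x) ^ 2) * (r * (1 - N x) + 1) - 1 := ⟨_, rfl⟩
  obtain ⟨ψ, hψdef⟩ : ∃ f : ℝ → ℝ, f = fun x => -(deriv N x) / N x := ⟨_, rfl⟩
  have hψder : ∀ x, HasDerivAt ψ (ψ x ^ 2 - c * ψ x + g x) x := by
    intro x
    simp only [hψdef]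
    have h1 : HasDerivAt (fun y => -(deriv N y)) (-(deriv (deriv N) x)) x :=
      ((hN'd x).hasDerivAt).neg
    have h3 := h1.div ((hNd x).hasDerivAt) (hN0 x)
    have heq : (-(deriv N x) / N x) ^ 2 - c * (-(deriv N x) / N x) + g x
        = (-(deriv (deriv N) x) * N x - -(deriv N x) * deriv N x) / N x ^ 2 := by
      have hx0 := hN0 x
      have hN'' : deriv (deriv N) x = -(c * deriv N x) - N x * g x := by
        have e := heqN x
        simp only [hgdef]
        linarith
      rw [hN'']
      field_simp
      ring
    rw [heq]
    exact h3
  have hψd : Differentiable ℝ ψ := fun x => (hψder x).differentiableAt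
  have hψ' : ∀ x, deriv ψ x = ψ x ^ 2 - c * ψ x + g x := fun x => (hψder x).deriv
  have hN'np : ∀ x, deriv N x ≤ 0 := by
    intro x
    have := mono_deriv_nonneg (fun y => -(N y)) (fun a b hab => by
      simp only [neg_le_neg_iff]; exact hNanti.antitone hab) hNd.neg x
    have h2 : deriv (fun y => -(N y)) x = -(deriv N x) := by
      simpa using ((hNd x).hasDerivAt.neg).deriv
    rw [h2] at this
    linarith
  have hψnn : ∀ x, 0 ≤ ψ x := by
    intro x
    simp only [hψdef]
    exact div_nonneg (by linarith [hN'np x]) (hNpos x).le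
  -- bound on g
  have hgbd : ∀ x, |g x| ≤ r + 2 := by
    intro x
    have h1 := hN1 x
    have h2 := hNpos x
    have h3 := hPnn x
    have h4 : P x ≤ 1 := le_trans (hMub x) hMle1
    have h5 : 0 ≤ (1 - P x)^2 := sq_nonneg _
    have h6 : (1 - P x)^2 ≤ 1 := by nlinarith
    have h7 : 1 - s + s * (1 - P x)^2 ≤ 1 := by nlinarith
    have h8 : 1/2 ≤ 1 - s + s * (1 - P x)^2 := by nlinarith
    have h9 : 1 < r * (1 - N x) + 1 := by nlinarith
    have h10 : r * (1 - N x) + 1 ≤ r + 1 := by nlinarith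
    have hp1 : (1 - s + s*(1-P x)^2) * (r*(1-N x)+1) ≤ 1 * (r+1) :=
      mul_le_mul h7 h10 (by linarith) (by linarith)
    have hp2 : (1/2 : ℝ) * 1 ≤ (1 - s + s*(1-P x)^2) * (r*(1-N x)+1) :=
      mul_le_mul h8 h9.le (by norm_num) (by linarith)
    rw [abs_le]
    simp only [hgdef]
    constructor <;> linarith
  -- global bound for ψ
  obtain ⟨Gb, hGbdef⟩ : ∃ t : ℝ, t = r + 2 := ⟨_, rfl⟩
  obtain ⟨K0, hK0def⟩ : ∃ t : ℝ, t = 2*|c| + 2*Gb + 2 := ⟨_, rfl⟩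
  have hGb0 : 0 < Gb := by simp only [hGbdef]; linarith
  have hK00 : 2 ≤ K0 := by simp only [hK0def]; nlinarith [abs_nonneg c]
  have hψub : ∀ x, ψ x < K0 := by
    intro x5
    by_contra hbig
    push_neg at hbig
    have hinv := invariant_ge ψ hψd x5 K0 hbig ?_
    swap
    · intro y _ hy
      rw [hψ' y, hy]
      have hg1 := (abs_le.mp (hgbd y)).1
      have hc1 : c ≤ |c| := le_abs_self c
      have hK1 : 2*|c| ≤ K0 := by simp only [hK0def]; linarith
      have hK2 : 2*Gb ≤ K0 := by simp only [hK0def]; linarith [abs_nonneg c]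
      have hKpos : 0 < K0 := by linarith
      have e1 : K0 * (K0/2) ≤ K0 * (K0 - |c|) :=
        mul_le_mul_of_nonneg_left (by linarith) hKpos.le
      have e2 : (2*Gb) * (K0/2) ≤ K0 * (K0/2) :=
        mul_le_mul_of_nonneg_right hK2 (by linarith)
      have e3 : c * K0 ≤ |c| * K0 := mul_le_mul_of_nonneg_right hc1 hKpos.le
      nlinarith
    -- now ψ ≥ K0 ≥ 2 on [x5, ∞); consider 1/ψ
    have hinvd : ∀ b, x5 ≤ b → ∀ y ∈ Icc x5 b, DifferentiableAt ℝ (fun z => (ψ z)⁻¹) y := by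
      intro b _ y hy
      have : ψ y ≠ 0 := by have := hinv y hy.1; linarith
      exact ((hψd y).inv this)
    have hderiv_inv : ∀ y, x5 ≤ y → deriv (fun z => (ψ z)⁻¹) y ≤ -(1/2) := by
      intro y hy
      have hψy := hinv y hy
      have hne : ψ y ≠ 0 := by linarith
      have hD : deriv (fun z => (ψ z)⁻¹) y = _ := ((hψder y).inv hne).deriv
      rw [hD]
      rw [div_le_iff₀ (by positivity : (0:ℝ) < ψ y ^ 2)]
      have hg1 := (abs_le.mp (hgbd y)).1
      have hc1 : c ≤ |c| := le_abs_self c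
      have hK1 : 2*|c| ≤ K0 := by simp only [hK0def]; linarith
      have hK2 : 2*Gb ≤ K0 := by simp only [hK0def]; linarith [abs_nonneg c]
      -- goal: -(ψ y ^2 - c * ψ y + g y) ≤ -(1/2) * ψ y ^2
      -- i.e. ψ²/2 ≤ ψ² - cψ + g + ... : suffices cψ - g ≤ ψ²/2
      have hψ2 : 2 ≤ ψ y := by linarith
      have e1 : c * ψ y ≤ |c| * ψ y := mul_le_mul_of_nonneg_right hc1 (by linarith)
      have hK0half : K0/2 = |c| + Gb + 1 := by simp only [hK0def]; ring
      have e3 : (|c| + Gb + 1) * ψ y ≤ (ψ y / 2) * ψ y :=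
        mul_le_mul_of_nonneg_right (by linarith) (by linarith)
      have e4 : Gb * 1 ≤ Gb * ψ y := mul_le_mul_of_nonneg_left (by linarith) hGb0.le
      have hsq : ψ y ^ 2 = ψ y * ψ y := sq (ψ y)
      have e5 : ψ y / 2 * ψ y = ψ y ^ 2 / 2 := by ring
      linarith
    have hψx5 : 0 < ψ x5 := by linarith [hinv x5 le_rfl]
    obtain ⟨b, hbdef⟩ : ∃ t : ℝ, t = x5 + 2*(ψ x5)⁻¹ + 2 := ⟨_, rfl⟩
    have hbge : x5 ≤ b := by
      have : 0 < (ψ x5)⁻¹ := by positivity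
      simp only [hbdef]; linarith
    have hdec := decay_from_deriv (fun z => (ψ z)⁻¹) (-(1/2)) x5 b hbge
      (hinvd b hbge) (fun y hy => hderiv_inv y hy.1)
    have hψb : 0 < ψ b := by linarith [hinv b hbge]
    have h1 : 0 < (ψ b)⁻¹ := by positivity
    have h2 : -(1/2) * (b - x5) = -(ψ x5)⁻¹ - 1 := by simp only [hbdef]; ring
    rw [h2] at hdec
    linarith
  -- second-order equation for deriv P in terms of ψ
  have hθeq : ∀ x, deriv (deriv P) x = (2*ψ x - c) * deriv P x - F x := by
    intro x
    have hx0 := hN0 x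
    have e2 : N x * deriv (deriv P) x
        = N x * ((2*ψ x - c) * deriv P x - F x) := by
      simp only [hψdef]
      field_simp
      linear_combination key x
    exact mul_left_cancel₀ hx0 e2
  -- PART: M ≥ 1
  have hMge1 : 1 ≤ M := by
    by_contra hM1
    push_neg at hM1
    have hσ0 : 0 < s * P 0 + (1 - 2*s) := by
      rcases lt_or_eq_of_le hs with h | h
      · nlinarith [hPpos 0, hPnn 0]
      · rw [h]; nlinarith [hPpos 0]
    obtain ⟨β', hβdef⟩ : ∃ t : ℝ, t = P 0 * (1 - M) * (s * P 0 + (1 - 2*s)) := ⟨_, rfl⟩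
    have hβ0 : 0 < β' := by
      rw [hβdef]
      exact mul_pos (mul_pos (hPpos 0) (by linarith)) hσ0
    have hFlb : ∀ x, 0 ≤ x → β' ≤ F x := by
      intro x hx
      have h1 : 1 ≤ r * (1 - N x) + 1 := by nlinarith [hN1 x]
      have h2 : P 0 ≤ P x := hPmono.monotone hx
      have hPxM : P x ≤ M := hMub x
      have h3 : 1 - M ≤ 1 - P x := by linarith
      have h4 : s * P 0 + (1 - 2*s) ≤ s * P x + (1 - 2*s) := by nlinarith
      have m1 : P 0 * (1 - M) ≤ P x * (1 - P x) :=
        mul_le_mul h2 h3 (by linarith) (hPnn x)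
      have m2 : (P 0 * (1 - M)) * (s * P 0 + (1 - 2*s))
          ≤ (P x * (1 - P x)) * (s * P x + (1 - 2*s)) :=
        mul_le_mul m1 h4 hσ0.le (mul_nonneg (hPnn x) (by linarith))
      have m3 : (P x * (1 - P x)) * (s * P x + (1 - 2*s))
          ≤ (r * (1 - N x) + 1) * ((P x * (1 - P x)) * (s * P x + (1 - 2*s))) :=
        le_mul_of_one_le_left (mul_nonneg (mul_nonneg (hPnn x) (by linarith)) (by linarith)) h1
      have hFx : F x = (r * (1 - N x) + 1) * ((P x * (1 - P x)) * (s * P x + (1 - 2*s))) := by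
        simp only [hF]; ring
      rw [hFx, hβdef]
      linarith
    obtain ⟨KK, hKKdef⟩ : ∃ t : ℝ, t = 2*K0 + |c| + 1 := ⟨_, rfl⟩
    have hKK0 : 0 < KK := by rw [hKKdef]; linarith [abs_nonneg c, hK00]
    obtain ⟨τ, hτdef⟩ : ∃ t : ℝ, t = β' / (2*KK) := ⟨_, rfl⟩
    have hτ0 : 0 < τ := by rw [hτdef]; positivity
    have hcoeff : ∀ x, 0 ≤ 2*ψ x - c ∧ 2*ψ x - c ≤ KK := by
      intro x
      constructor
      · linarith [hψnn x, hcneg]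
      · rw [hKKdef]; linarith [(hψub x), le_abs_self c, neg_abs_le c]
    have hKKτ : KK * τ = β'/2 := by
      rw [hτdef]; field_simp
    by_cases hcase : ∃ x6, 0 ≤ x6 ∧ deriv P x6 ≤ τ
    · obtain ⟨x6, hx60, hx6τ⟩ := hcase
      have hle := invariant_le (deriv P) hP'd x6 τ hx6τ ?_
      swap
      · intro y hy hyτ
        rw [hθeq y, hyτ]
        have hm : (2*ψ y - c) * τ ≤ KK * τ :=
          mul_le_mul_of_nonneg_right (hcoeff y).2 hτ0.le
        have := hFlb y (le_trans hx60 hy)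
        linarith [hKKτ]
      have hd2 : ∀ y, x6 ≤ y → deriv (deriv P) y ≤ -(β'/2) := by
        intro y hy
        rw [hθeq y]
        have hθτ := hle y hy
        have hm : (2*ψ y - c) * deriv P y ≤ KK * τ := by
          calc (2*ψ y - c) * deriv P y ≤ KK * deriv P y :=
                mul_le_mul_of_nonneg_right (hcoeff y).2 (hP'nn y)
          _ ≤ KK * τ := mul_le_mul_of_nonneg_left hθτ hKK0.le
        have := hFlb y (le_trans hx60 hy)
        linarith [hKKτ]
      obtain ⟨b2, hb2def⟩ : ∃ t : ℝ, t = x6 + (2*τ + 4)/β' := ⟨_, rfl⟩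
      have hb2ge : x6 ≤ b2 := by
        rw [hb2def]
        have : 0 < (2*τ + 4)/β' := by positivity
        linarith
      have hdec := decay_from_deriv (deriv P) (-(β'/2)) x6 b2 hb2ge
        (fun y _ => hP'd y) (fun y hy => hd2 y hy.1)
      have hval : -(β'/2) * (b2 - x6) = -(τ + 2) := by
        rw [hb2def]; field_simp; ring
      rw [hval] at hdec
      linarith [hP'nn b2]
    · push_neg at hcase
      obtain ⟨b3, hb3def⟩ : ∃ t : ℝ, t = (M + 1)/τ := ⟨_, rfl⟩
      have hb3ge : (0:ℝ) ≤ b3 := by rw [hb3def]; positivity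
      have hgr := grow_from_deriv P τ 0 b3 hb3ge (fun y _ => hPd y)
        (fun y hy => (hcase y hy.1).le)
      have hval : τ * (b3 - 0) = M + 1 := by
        rw [hb3def]; field_simp; ring
      rw [hval] at hgr
      linarith [hMub b3, hPpos 0]
  have hMeq : M = 1 := le_antisymm hMle1 hMge1
  have hconc1 : Tendsto P atTop (nhds 1) := hMeq ▸ hMtend
  -- PART: speed bound
  have hspeed : c ≤ -2 * Real.sqrt (1 - 2*s) := by
    by_contra hbnd
    push_neg at hbnd
    have h2snn : (0:ℝ) ≤ 1 - 2*s := by linarith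
    have hsq : Real.sqrt (1-2*s) ^ 2 = 1 - 2*s := Real.sq_sqrt h2snn
    have hsqnn := Real.sqrt_nonneg (1-2*s)
    have hc2 : c^2 < 4*(1-2*s) := by
      have h1 : 0 < c + 2*Real.sqrt (1-2*s) := by linarith
      have h2 : 0 < 2*Real.sqrt (1-2*s) - c := by linarith
      nlinarith [mul_pos h1 h2]
    have h2s : 0 < 1 - 2*s := by nlinarith [sq_nonneg c]
    obtain ⟨ρ, hρdef⟩ : ∃ t : ℝ, t = c^2/(4*(1-2*s)) := ⟨_, rfl⟩
    have hρ1 : ρ < 1 := by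
      rw [hρdef, div_lt_one (by linarith)]
      linarith
    have hρ0 : 0 ≤ ρ := by rw [hρdef]; positivity
    obtain ⟨δ, hδdef⟩ : ∃ t : ℝ, t = (1 - ρ)/4 := ⟨_, rfl⟩
    have hδ0 : 0 < δ := by rw [hδdef]; linarith
    have hδ14 : δ ≤ 1/4 := by rw [hδdef]; linarith
    obtain ⟨A0, hA0def⟩ : ∃ t : ℝ, t = (1-δ)^3 * (1-2*s) := ⟨_, rfl⟩
    have hA0gt : c^2/4 < A0 := by
      have e1 : 1 - 3*δ ≤ (1-δ)^3 := by
        nlinarith [mul_nonneg (mul_nonneg hδ0.le hδ0.le) (show (0:ℝ) ≤ 3 - δ by linarith)]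
      have e2 : ρ < 1 - 3*δ := by rw [hδdef]; linarith
      have e3 : ρ * (1-2*s) < (1-3*δ) * (1-2*s) := by
        exact mul_lt_mul_of_pos_right e2 h2s
      have e4 : ρ * (1-2*s) = c^2/4 := by
        rw [hρdef]; field_simp
      have e5 : (1-3*δ) * (1-2*s) ≤ (1-δ)^3 * (1-2*s) :=
        mul_le_mul_of_nonneg_right e1 h2s.le
      rw [hA0def]; linarith
    obtain ⟨k2, hk2def⟩ : ∃ t : ℝ, t = A0 - c^2/4 := ⟨_, rfl⟩
    have hk20 : 0 < k2 := by rw [hk2def]; linarith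
    have hA00 : 0 < A0 := by nlinarith [sq_nonneg c]
    -- region at -∞
    have hev1 : P ⁻¹' (Iio δ) ∈ atBot := hPlim (isOpen_Iio.mem_nhds (by simpa using hδ0))
    have hev2 : N ⁻¹' (Ioi (1-δ)) ∈ atBot :=
      hNlim (isOpen_Ioi.mem_nhds (by simp; linarith))
    obtain ⟨xa, hxa⟩ := eventually_atBot.mp hev1
    obtain ⟨xb, hxb⟩ := eventually_atBot.mp hev2
    obtain ⟨x0, hx0def⟩ : ∃ t : ℝ, t = min xa xb := ⟨_, rfl⟩
    have hx0P : ∀ x, x ≤ x0 → P x < δ := by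
      intro x hx
      exact hxa x (le_trans hx (by rw [hx0def]; exact min_le_left _ _))
    have hx0N : ∀ x, x ≤ x0 → 1 - δ < N x := by
      intro x hx
      exact hxb x (le_trans hx (by rw [hx0def]; exact min_le_right _ _))
    -- φ = Q/P
    obtain ⟨φ, hφdef⟩ : ∃ f : ℝ → ℝ, f = fun x => Q x / P x := ⟨_, rfl⟩
    have hφd : Differentiable ℝ φ := by
      rw [hφdef]
      exact fun x => ((hQd x).div (hPd x) (hPpos x).ne')
    have hφnn : ∀ x, 0 ≤ φ x := by
      intro x
      rw [hφdef]
      exact div_nonneg (hQnn x) (hPpos x).le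
    have hφderiv : ∀ x, deriv φ x = (deriv Q x * P x - Q x * deriv P x)/(P x)^2 := by
      intro x
      rw [hφdef]
      exact ((hQd x).hasDerivAt.div ((hPd x).hasDerivAt) (hPpos x).ne').deriv
    -- key Riccati inequality on the left region
    have hφric : ∀ x, x ≤ x0 → deriv φ x ≤ -(c * φ x) - A0 - φ x^2 := by
      intro x hx
      have hPδ : P x < δ := hx0P x hx
      have hNδ : 1 - δ < N x := hx0N x hx
      have h1 : 1 ≤ r * (1 - N x) + 1 := by nlinarith [hN1 x]
      have hF1 : (1-δ)*(1-2*s) * P x ≤ F x := by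
        have m1 : (1-δ)*(1-2*s) ≤ (1 - P x)*(s*P x + (1-2*s)) := by
          have a1 : 1-δ ≤ 1 - P x := by linarith
          have a2 : 1-2*s ≤ s*P x + (1-2*s) := by nlinarith [hPnn x]
          exact mul_le_mul a1 a2 (by linarith) (by linarith)
        have m2 : (1-δ)*(1-2*s) * P x ≤ ((1 - P x)*(s*P x + (1-2*s))) * P x :=
          mul_le_mul_of_nonneg_right m1 (hPnn x)
        have m3 : ((1 - P x)*(s*P x + (1-2*s))) * P x
            ≤ (r * (1 - N x) + 1) * (((1 - P x)*(s*P x + (1-2*s))) * P x) := by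
          apply le_mul_of_one_le_left ?_ h1
          apply mul_nonneg (mul_nonneg (by linarith) (by nlinarith [hPnn x])) (hPnn x)
        have hFx : F x = (r * (1 - N x) + 1) * (((1 - P x)*(s*P x + (1-2*s))) * P x) := by
          simp only [hF]; ring
        rw [hFx]
        linarith
      have hN2 : (1-δ)^2 ≤ N x ^ 2 := by nlinarith
      have hNF : A0 * P x ≤ N x^2 * F x := by
        calc A0 * P x = (1-δ)^2 * ((1-δ)*(1-2*s) * P x) := by rw [hA0def]; ring
        _ ≤ N x^2 * ((1-δ)*(1-2*s) * P x) := by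
            apply mul_le_mul_of_nonneg_right hN2
            apply mul_nonneg (mul_nonneg (by linarith) h2s.le) (hPnn x)
        _ ≤ N x^2 * F x := mul_le_mul_of_nonneg_left hF1 (sq_nonneg _)
      have hnum : deriv Q x * P x - Q x * deriv P x
          ≤ (-(c*Q x) - A0 * P x) * P x - Q x * Q x := by
        rw [hQ' x]
        have e1 : Q x * Q x ≤ Q x * deriv P x :=
          mul_le_mul_of_nonneg_left (hP'geQ x) (hQnn x)
        have e2 : (-(c*Q x) - N x^2*F x) * P x ≤ (-(c*Q x) - A0*P x) * P x :=
          mul_le_mul_of_nonneg_right (by linarith) (hPnn x)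
        linarith
      have hP2pos : 0 < P x ^ 2 := pow_pos (hPpos x) 2
      have hdiv : deriv φ x ≤ ((-(c*Q x) - A0*P x) * P x - Q x * Q x)/(P x)^2 := by
        rw [hφderiv x]
        exact (div_le_div_iff_of_pos_right hP2pos).mpr hnum
      have hident : ((-(c*Q x) - A0*P x) * P x - Q x * Q x)/(P x)^2
          = -(c * φ x) - A0 - φ x^2 := by
        rw [hφdef]
        field_simp [(hPpos x).ne']
      linarith [hdiv, hident.le, hident.ge]
    have hφle : ∀ x, x ≤ x0 → deriv φ x ≤ -k2 := by
      intro x hx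
      have h1 := hφric x hx
      have h2 : -(c * φ x) - A0 - φ x^2 ≤ -k2 := by
        rw [hk2def]
        nlinarith [sq_nonneg (φ x + c/2)]
      linarith
    have hgrowφ : ∀ x, x ≤ x0 → k2 * (x0 - x) ≤ φ x := by
      intro x hx
      have := decay_from_deriv φ (-k2) x x0 hx (fun y _ => hφd y)
        (fun y hy => hφle y hy.2)
      have h0 := hφnn x0
      linarith
    obtain ⟨x1, hx1def⟩ : ∃ t : ℝ, t = x0 - (2*|c| + 2)/k2 := ⟨_, rfl⟩
    have hx1le : x1 ≤ x0 := by
      rw [hx1def]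
      have : 0 < (2*|c| + 2)/k2 := by positivity
      linarith
    have hφΛ : ∀ x, x ≤ x1 → 2*|c| + 2 ≤ φ x := by
      intro x hx
      have h1 := hgrowφ x (le_trans hx hx1le)
      have h2 : k2 * (x0 - x1) = 2*|c| + 2 := by
        rw [hx1def]
        field_simp
        ring
      have h3 : k2 * (x0 - x1) ≤ k2 * (x0 - x) :=
        mul_le_mul_of_nonneg_left (by linarith) hk20.le
      linarith
    have hφpos : ∀ x, x ≤ x1 → 0 < φ x := by
      intro x hx
      have := hφΛ x hx
      linarith [abs_nonneg c]
    have hinvφ : ∀ x, x ≤ x1 → 1/2 ≤ deriv (fun y => (φ y)⁻¹) x := by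
      intro x hx
      have hφx : 2*|c| + 2 ≤ φ x := hφΛ x hx
      have hφp := hφpos x hx
      have hD : deriv (fun y => (φ y)⁻¹) x = _ := ((hφd x).hasDerivAt.inv hφp.ne').deriv
      rw [hD]
      have h1 : deriv φ x ≤ -(c * φ x) - A0 - φ x^2 := hφric x (le_trans hx hx1le)
      have h2 : -(c * φ x) ≤ |c| * φ x := by
        have := mul_le_mul_of_nonneg_right (neg_le_abs c) hφp.le
        linarith [this]
      have h3 : (|c| + 1) * φ x ≤ (φ x / 2) * φ x :=
        mul_le_mul_of_nonneg_right (by linarith) hφp.le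
      have hsqφ : φ x ^ 2 = φ x * φ x := sq (φ x)
      have h4 : deriv φ x ≤ -(φ x^2/2) := by nlinarith [hA00, hφp.le]
      rw [le_div_iff₀ (pow_pos hφp 2)]
      nlinarith [h4]
    have hφ1pos : 0 < φ x1 := hφpos x1 le_rfl
    obtain ⟨x2, hx2def⟩ : ∃ t : ℝ, t = x1 - 2*(φ x1)⁻¹ - 2 := ⟨_, rfl⟩
    have hx2le : x2 ≤ x1 := by
      rw [hx2def]
      have : 0 < (φ x1)⁻¹ := inv_pos.mpr hφ1pos
      linarith
    have hdiffinv : ∀ y ∈ Icc x2 x1, DifferentiableAt ℝ (fun z => (φ z)⁻¹) y :=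
      fun y hy => (hφd y).inv (hφpos y hy.2).ne'
    have hgr := grow_from_deriv (fun z => (φ z)⁻¹) (1/2) x2 x1 hx2le hdiffinv
      (fun y hy => hinvφ y hy.2)
    have hval : (1/2) * (x1 - x2) = (φ x1)⁻¹ + 1 := by rw [hx2def]; ring
    have hx2pos : 0 < (φ x2)⁻¹ := inv_pos.mpr (hφpos x2 hx2le)
    rw [hval] at hgr
    linarith
  exact ⟨hconc1, hcneg, hspeed⟩
end

section
/- Let s ∈ [0,1) and let B, D : ℝ → ℝ be continuous functions. Let n_D, n_O : (0,∞) × ℝ → ℝ be positive functions, C¹ in t and C² in x, satisfying ∂_t n_D - ∂_xx n_D = n_D·((1-s)·(1 + n_O/(n_D+n_O))·B(n_D+n_O) - D(n_D+n_O)) and ∂_t n_O - ∂_xx n_O = n_O·((n_O/(n_D+n_O))·B(n_D+n_O) - D(n_D+n_O)). Define n = n_D + n_O and p = n_D/n. Then (p, n) satisfies ∂_t p - ∂_xx p - 2·(∂_x n / n)·∂_x p = B(n)·p(1-p)·(s·p - (2s-1)) and ∂_t n - ∂_xx n = n·((1 - s + s(1-p)²)·B(n) - D(n)) on (0,∞)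 × ℝ. -/
/-- If `(n_D, n_O)` is a positive classical solution of the gene-drive
density system with birth rate `B` and death rate `D`, then the total density
`n = n_D + n_O` and the drive frequency `p = n_D / n` satisfy the frequency system
`∂_t p - ∂_xx p - 2 (∂_x n / n) ∂_x p = B(n) p (1-p) (s p - (2s-1))` and
`∂_t n - ∂_xx n = n ((1 - s + s(1-p)²) B(n) - D(n))` on `(0,∞) × ℝ`. -/
theorem stmt15
    (s : ℝ) (hs : s ∈ Set.Ico (0 : ℝ) 1)
    (B D : ℝ → ℝ) (hB : Continuous B) (hD : Continuous D)
    (nD nO : ℝ → ℝ → ℝ)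
    (hDpos : ∀ t > (0 : ℝ), ∀ x, 0 < nD t x)
    (hOpos : ∀ t > (0 : ℝ), ∀ x, 0 < nO t x)
    (hDt : ∀ x : ℝ, ContDiffOn ℝ 1 (fun t => nD t x) (Set.Ioi 0))
    (hOt : ∀ x : ℝ, ContDiffOn ℝ 1 (fun t => nO t x) (Set.Ioi 0))
    (hDx : ∀ t > (0 : ℝ), ContDiff ℝ 2 (fun x => nD t x))
    (hOx : ∀ t > (0 : ℝ), ContDiff ℝ 2 (fun x => nO t x))
    (heqD : ∀ t > (0 : ℝ), ∀ x,
      deriv (fun τ => nD τ x) t - deriv (deriv (fun y => nD t y)) x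
        = nD t x * ((1 - s) * (1 + nO t x / (nD t x + nO t x))
            * B (nD t x + nO t x) - D (nD t x + nO t x)))
    (heqO : ∀ t > (0 : ℝ), ∀ x,
      deriv (fun τ => nO τ x) t - deriv (deriv (fun y => nO t y)) x
        = nO t x * ((nO t x / (nD t x + nO t x))
            * B (nD t x + nO t x) - D (nD t x + nO t x)))
    (n p : ℝ → ℝ → ℝ)
    (hn : ∀ t x, n t x = nD t x + nO t x)
    (hp : ∀ t x, p t x = nD t x / n t x) :
    (∀ t > (0 : ℝ), ∀ x,
      deriv (fun τ => p τ x) t - deriv (deriv (fun y => p t y)) x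
          - 2 * (deriv (fun y => n t y) x / n t x) * deriv (fun y => p t y) x
        = B (n t x) * p t x * (1 - p t x) * (s * p t x - (2 * s - 1))) ∧
    (∀ t > (0 : ℝ), ∀ x,
      deriv (fun τ => n τ x) t - deriv (deriv (fun y => n t y)) x
        = n t x * ((1 - s + s * (1 - p t x) ^ 2) * B (n t x) - D (n t x))) := by
  -- Common derivative computations
  have main : ∀ t > (0 : ℝ), ∀ x : ℝ,
      deriv (fun τ => n τ x) t
        = deriv (fun τ => nD τ x) t + deriv (fun τ => nO τ x) t ∧
      deriv (deriv (fun y => n t y)) x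
        = deriv (deriv (fun y => nD t y)) x + deriv (deriv (fun y => nO t y)) x ∧
      deriv (fun y => n t y) x
        = deriv (fun y => nD t y) x + deriv (fun y => nO t y) x ∧
      deriv (fun τ => p τ x) t
        = (deriv (fun τ => nD τ x) t * (nD t x + nO t x)
            - nD t x * (deriv (fun τ => nD τ x) t + deriv (fun τ => nO τ x) t))
          / (nD t x + nO t x) ^ 2 ∧
      deriv (fun y => p t y) x
        = (deriv (fun y => nD t y) x * (nD t x + nO t x)
            - nD t x * (deriv (fun y => nD t y) x + deriv (fun y => nO t y) x))
          / (nD t x + nO t x) ^ 2 ∧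
      deriv (deriv (fun y => p t y)) x
        = ((deriv (deriv (fun y => nD t y)) x * (nD t x + nO t x)
              + deriv (fun y => nD t y) x * (deriv (fun y => nD t y) x + deriv (fun y => nO t y) x)
              - (deriv (fun y => nD t y) x * (deriv (fun y => nD t y) x + deriv (fun y => nO t y) x)
                  + nD t x * (deriv (deriv (fun y => nD t y)) x + deriv (deriv (fun y => nO t y)) x)))
              * (nD t x + nO t x) ^ 2
            - (deriv (fun y => nD t y) x * (nD t x + nO t x)
                - nD t x * (deriv (fun y => nD t y) x + deriv (fun y => nO t y) x))
              * (2 * (nD t x + nO t x) ^ 1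
                  * (deriv (fun y => nD t y) x + deriv (fun y => nO t y) x)))
          / ((nD t x + nO t x) ^ 2) ^ 2 := by
    intro t ht x
    have hNpos : ∀ y, 0 < nD t y + nO t y := fun y => add_pos (hDpos t ht y) (hOpos t ht y)
    have hNne : ∀ y, nD t y + nO t y ≠ 0 := fun y => (hNpos y).ne'
    -- x-regularity
    have hu2 : ContDiff ℝ ((1:ℕ)+1) (fun y => nD t y) := hDx t ht
    have hv2 : ContDiff ℝ ((1:ℕ)+1) (fun y => nO t y) := hOx t ht
    rw [contDiff_succ_iff_deriv] at hu2 hv2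
    have hud : Differentiable ℝ (fun y => nD t y) := hu2.1
    have hvd : Differentiable ℝ (fun y => nO t y) := hv2.1
    have hud' : Differentiable ℝ (deriv (fun y => nD t y)) := hu2.2.2.differentiable (by simp)
    have hvd' : Differentiable ℝ (deriv (fun y => nO t y)) := hv2.2.2.differentiable (by simp)
    -- t-differentiability at t
    have hmem : Set.Ioi (0:ℝ) ∈ nhds t := isOpen_Ioi.mem_nhds ht
    have hudt : ∀ y : ℝ, DifferentiableAt ℝ (fun τ => nD τ y) t :=
      fun y => (((hDt y).contDiffAt hmem).differentiableAt one_ne_zero)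
    have hvdt : ∀ y : ℝ, DifferentiableAt ℝ (fun τ => nO τ y) t :=
      fun y => (((hOt y).contDiffAt hmem).differentiableAt one_ne_zero)
    -- function identities
    have hnfunt : (fun τ => n τ x) = fun τ => nD τ x + nO τ x := funext fun τ => hn τ x
    have hnfunx : (fun y => n t y) = fun y => nD t y + nO t y := funext fun y => hn t y
    have hpfunt : (fun τ => p τ x) = fun τ => nD τ x / (nD τ x + nO τ x) := by
      funext τ; rw [hp, hn]
    have hpfunx : (fun y => p t y) = fun y => nD t y / (nD t y + nO t y) := by
      funext y; rw [hp, hn]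
    -- HasDerivAt facts in x
    have hu' : ∀ y, HasDerivAt (fun z => nD t z) (deriv (fun z => nD t z) y) y :=
      fun y => (hud y).hasDerivAt
    have hv' : ∀ y, HasDerivAt (fun z => nO t z) (deriv (fun z => nO t z) y) y :=
      fun y => (hvd y).hasDerivAt
    have hu'' : HasDerivAt (deriv (fun z => nD t z)) (deriv (deriv (fun z => nD t z)) x) x :=
      (hud' x).hasDerivAt
    have hv'' : HasDerivAt (deriv (fun z => nO t z)) (deriv (deriv (fun z => nO t z)) x) x :=
      (hvd' x).hasDerivAt
    -- first x-derivative of p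
    have hderivP : deriv (fun y => p t y)
        = fun y => (deriv (fun z => nD t z) y * (nD t y + nO t y)
            - nD t y * (deriv (fun z => nD t z) y + deriv (fun z => nO t z) y))
          / (nD t y + nO t y) ^ 2 := by
      funext y
      rw [hpfunx]
      exact (((hu' y).div ((hu' y).add (hv' y)) (hNne y))).deriv
    refine ⟨?_, ?_, ?_, ?_, ?_, ?_⟩
    · rw [hnfunt]; exact ((hudt x).hasDerivAt.add (hvdt x).hasDerivAt).deriv
    · rw [hnfunx]
      have : deriv (fun y => nD t y + nO t y)
          = fun y => deriv (fun z => nD t z) y + deriv (fun z => nO t z) y := by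
        funext y; exact ((hu' y).add (hv' y)).deriv
      rw [this]
      exact (hu''.add hv'').deriv
    · rw [hnfunx]; exact ((hu' x).add (hv' x)).deriv
    · rw [hpfunt]
      exact ((hudt x).hasDerivAt.div ((hudt x).hasDerivAt.add (hvdt x).hasDerivAt) (hNne x)).deriv
    · rw [hpfunx]
      exact (((hu' x).div ((hu' x).add (hv' x)) (hNne x))).deriv
    · rw [hderivP]
      have hf : HasDerivAt
          (fun y => deriv (fun z => nD t z) y * (nD t y + nO t y)
            - nD t y * (deriv (fun z => nD t z) y + deriv (fun z => nO t z) y))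
          (deriv (deriv (fun y => nD t y)) x * (nD t x + nO t x)
              + deriv (fun y => nD t y) x * (deriv (fun y => nD t y) x + deriv (fun y => nO t y) x)
              - (deriv (fun y => nD t y) x * (deriv (fun y => nD t y) x + deriv (fun y => nO t y) x)
                  + nD t x * (deriv (deriv (fun y => nD t y)) x + deriv (deriv (fun y => nO t y)) x))) x :=
        (hu''.mul ((hu' x).add (hv' x))).sub ((hu' x).mul (hu''.add hv''))
      have hg : HasDerivAt (fun y => (nD t y + nO t y) ^ 2)
          (2 * (nD t x + nO t x) ^ 1 * (deriv (fun y => nD t y) x + deriv (fun y => nO t y) x)) x := by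
        have := ((hu' x).add (hv' x)).pow 2
        norm_num at this ⊢
        try exact this
        try { convert this using 1; ring }
      have hgne : (nD t x + nO t x) ^ 2 ≠ 0 := pow_ne_zero _ (hNne x)
      exact (hf.div hg hgne).deriv
  constructor
  · intro t ht x
    obtain ⟨h1, h2, h3, h4, h5, h6⟩ := main t ht x
    have e1 := heqD t ht x
    have e2 := heqO t ht x
    have hNpos : 0 < nD t x + nO t x := add_pos (hDpos t ht x) (hOpos t ht x)
    have hNne : nD t x + nO t x ≠ 0 := hNpos.ne'
    rw [h4, h6, h3, h5, hn, hp, hn]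
    set a := nD t x
    set b := nO t x
    set a' := deriv (fun y => nD t y) x
    set b' := deriv (fun y => nO t y) x
    set a'' := deriv (deriv (fun y => nD t y)) x
    set b'' := deriv (deriv (fun y => nO t y)) x
    set at' := deriv (fun τ => nD τ x) t
    set bt' := deriv (fun τ => nO τ x) t
    have key : (at' * (a + b) - a * (at' + bt')) / (a + b) ^ 2
          - ((a'' * (a + b) + a' * (a' + b') - (a' * (a' + b') + a * (a'' + b''))) * (a + b) ^ 2
              - (a' * (a + b) - a * (a' + b')) * (2 * (a + b) ^ 1 * (a' + b'))) / ((a + b) ^ 2) ^ 2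
          - 2 * ((a' + b') / (a + b)) * ((a' * (a + b) - a * (a' + b')) / (a + b) ^ 2)
        = ((at' - a'') * (a + b) - a * ((at' - a'') + (bt' - b''))) / (a + b) ^ 2 := by
      field_simp
      ring
    rw [key, e1, e2]
    field_simp
    ring
  · intro t ht x
    obtain ⟨h1, h2, h3, h4, h5, h6⟩ := main t ht x
    have e1 := heqD t ht x
    have e2 := heqO t ht x
    have hNpos : 0 < nD t x + nO t x := add_pos (hDpos t ht x) (hOpos t ht x)
    have hNne : nD t x + nO t x ≠ 0 := hNpos.ne'
    rw [h1, h2, hn, hp, hn]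
    have key : deriv (fun τ => nD τ x) t + deriv (fun τ => nO τ x) t
          - (deriv (deriv (fun y => nD t y)) x + deriv (deriv (fun y => nO t y)) x)
        = (deriv (fun τ => nD τ x) t - deriv (deriv (fun y => nD t y)) x)
          + (deriv (fun τ => nO τ x) t - deriv (deriv (fun y => nO t y)) x) := by ring
    rw [key, e1, e2]
    field_simp
    ring
end

section
/- Let s ∈ [0,1), r > 0, c ∈ ℝ, and let (P, N) be a traveling wave of the gene-drive frequency system with speed c such that N'(x) → 0 as x → ±∞ and the functions x ↦ N'(x)² and x ↦ N(x)·N'(x)·((1-s+s(1-P(x))²)·(r(1-N(x))+1) - 1) are Lebesgue integrable over ℝ. Then c·∫_ℝ N'(x)² dx = -∫_ℝ N(x)·N'(x)·((1 - s + s(1-P(x))²)·(r(1-N(x)) + 1) - 1) dx. -/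
/-- For a traveling wave `(P, N)` of the gene-drive frequency system
with `N' → 0` at `±∞` and suitable integrability, multiplying the `N`-equation by
`N'` and integrating by parts over `ℝ` gives
`c ∫ N'² = -∫ N N' ((1 - s + s(1-P)²)(r(1-N)+1) - 1)`. -/
theorem stmt16
    (s r c : ℝ) (hs : s ∈ Set.Ico (0 : ℝ) 1) (hr : 0 < r)
    (P N : ℝ → ℝ)
    (hP2 : ContDiff ℝ 2 P) (hN2 : ContDiff ℝ 2 N)
    (hNpos : ∀ x, 0 < N x)
    (hPbd : Bornology.IsBounded (Set.range P))
    (hNbd : Bornology.IsBounded (Set.range N))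
    (hPnn : ∀ x, 0 ≤ P x)
    (hPmono : Monotone P) (hNanti : StrictAnti N)
    (hPlim : Filter.Tendsto P Filter.atBot (nhds 0))
    (hNlim : Filter.Tendsto N Filter.atBot (nhds 1))
    (heqP : ∀ x, -deriv (deriv P) x - c * deriv P x - 2 * (deriv N x / N x) * deriv P x
      = (r * (1 - N x) + 1) * P x * (1 - P x) * (s * P x - (2 * s - 1)))
    (heqN : ∀ x, -deriv (deriv N) x - c * deriv N x
      = N x * ((1 - s + s * (1 - P x) ^ 2) * (r * (1 - N x) + 1) - 1))
    (hN'bot : Filter.Tendsto (fun x => deriv N x) Filter.atBot (nhds 0))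
    (hN'top : Filter.Tendsto (fun x => deriv N x) Filter.atTop (nhds 0))
    (hint1 : MeasureTheory.Integrable (fun x => (deriv N x) ^ 2))
    (hint2 : MeasureTheory.Integrable (fun x => N x * deriv N x
      * ((1 - s + s * (1 - P x) ^ 2) * (r * (1 - N x) + 1) - 1))) :
    c * ∫ x : ℝ, (deriv N x) ^ 2
      = -∫ x : ℝ, N x * deriv N x
          * ((1 - s + s * (1 - P x) ^ 2) * (r * (1 - N x) + 1) - 1) := by
  -- h x = N'' x * N' x
  set h : ℝ → ℝ := fun x => deriv (deriv N) x * deriv N x with hh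
  -- pointwise identity: h = -c N'^2 - N N' (...)
  have hpt : ∀ x, h x = (-c) * (deriv N x) ^ 2
      - N x * deriv N x * ((1 - s + s * (1 - P x) ^ 2) * (r * (1 - N x) + 1) - 1) := by
    intro x
    have := heqN x
    have h2 : deriv (deriv N) x = -c * deriv N x
        - N x * ((1 - s + s * (1 - P x) ^ 2) * (r * (1 - N x) + 1) - 1) := by linarith
    simp only [hh, h2]; ring
  have hint : MeasureTheory.Integrable h := by
    have : MeasureTheory.Integrable (fun x => (-c) * (deriv N x) ^ 2
        - N x * deriv N x * ((1 - s + s * (1 - P x) ^ 2) * (r * (1 - N x) + 1) - 1)) :=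
      (hint1.const_mul (-c)).sub hint2
    exact this.congr (Filter.Eventually.of_forall fun x => (hpt x).symm)
  -- N' differentiable
  have hN1 : ContDiff ℝ 1 (deriv N) := by
    have : ContDiff ℝ (1+1) N := hN2
    exact ((contDiff_succ_iff_deriv.mp this).2).2
  have hd : ∀ x, HasDerivAt (fun y => deriv N y ^ 2 / 2) (h x) x := by
    intro x
    have h1 : HasDerivAt (deriv N) (deriv (deriv N) x) x :=
      ((hN1.differentiable one_ne_zero) x).hasDerivAt
    have := (h1.fun_pow 2).div_const 2
    refine this.congr_deriv ?_
    simp [hh]; ring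
  have hg0 : Filter.Tendsto (fun x => deriv N x ^ 2 / 2) Filter.atBot (nhds 0) := by
    have := (hN'bot.pow 2).div_const 2
    simpa using this
  have hg0' : Filter.Tendsto (fun x => deriv N x ^ 2 / 2) Filter.atTop (nhds 0) := by
    have := (hN'top.pow 2).div_const 2
    simpa using this
  have hzero : ∫ x : ℝ, h x = 0 := by
    rw [MeasureTheory.integral_of_hasDerivAt_of_tendsto hd hint hg0 hg0']
    ring
  have : ∫ x : ℝ, h x = (∫ x : ℝ, (-c) * (deriv N x) ^ 2)
      - ∫ x : ℝ, N x * deriv N x * ((1 - s + s * (1 - P x) ^ 2) * (r * (1 - N x) + 1) - 1) := by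
    rw [← MeasureTheory.integral_sub (hint1.const_mul (-c)) hint2]
    exact MeasureTheory.integral_congr_ae (Filter.Eventually.of_forall hpt)
  rw [hzero, MeasureTheory.integral_const_mul] at this
  linarith
end
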